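/- For M, N positive integers, the map is well-defined and bijective: i ↦ ((i mod M), ⌊i/M⌋) is a bijection from {0,…,MN−1} to {0,…,M−1} × {0,…,N−1}, and under this bijection the Zak-OTFS basis φ_i and the ODDM basis coincide as functions on ℤ_{MN}, hence the change-of-basis matrix between the ODDM and Zak-OTFS bases is the identity matrix (in particular, unitary and carrier-index-preserving). -/

import Mathlib

open Complex Finset

/-- The Zak-OTFS pulsone on `Z_{MN}` (sum over all integers `d`). -/
noncomputable def pulsone (M N : ℕ) (i n : ℕ) : ℂ :=
  (1 / Real.sqrt N) *
    ∑' d : ℤ, Complex.exp (2 * Real.pi * Complex.I * (d * (i / M : ℕ)) / N) *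
      (if (n : ℤ) - ((i : ℤ) % (M : ℤ)) - d * M = 0 then 1 else 0)

/-- The ODDM basis element on `Z_{MN}`. -/
noncomputable def oddmBasis (M N : ℕ) (i n : ℕ) : ℂ :=
  if n % M = i % M then
    (1 / Real.sqrt N) *
      Complex.exp (2 * Real.pi * Complex.I * ((i / M : ℕ) * (n / M : ℕ) : ℕ) / N)
  else 0

lemma pulsone_eq_oddm (M N : ℕ) (hM : 0 < M) (i n : ℕ) :
    pulsone M N i n = oddmBasis M N i n := by
  have hMZ : (M : ℤ) ≠ 0 := by exact_mod_cast hM.ne'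
  have hmodc : ((i : ℤ) % (M : ℤ)) = ((i % M : ℕ) : ℤ) := by push_cast; ring
  have hdm : (M : ℤ) * ((n / M : ℕ) : ℤ) + ((n % M : ℕ) : ℤ) = (n : ℤ) := by
    exact_mod_cast congrArg (Nat.cast : ℕ → ℤ) (Nat.div_add_mod n M)
  unfold pulsone oddmBasis
  by_cases h : n % M = i % M
  · rw [if_pos h, tsum_eq_single ((n / M : ℕ) : ℤ)]
    · rw [if_pos, mul_one]
      · congr 1
        rw [Int.cast_natCast]
        push_cast
        ring
      · rw [hmodc, ← h]; linarith [hdm]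
    · intro d hd
      rw [if_neg, mul_zero]
      intro hc
      apply hd
      have e1 : d * (M : ℤ) = ((n / M : ℕ) : ℤ) * M := by
        rw [hmodc, ← h] at hc; linarith [hdm]
      exact mul_right_cancel₀ hMZ e1
  · rw [if_neg h]
    have : ∀ d : ℤ, Complex.exp (2 * Real.pi * Complex.I * (d * (i / M : ℕ)) / N) *
        (if (n : ℤ) - ((i : ℤ) % (M : ℤ)) - d * M = 0 then 1 else 0) = 0 := by
      intro d
      rw [if_neg, mul_zero]
      intro hc
      apply h
      have hn : (n : ℤ) = ((i % M : ℕ) : ℤ) + d * M := by rw [← hmodc]; linarith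
      have h1 : (n : ℤ) % M = ((i % M : ℕ) : ℤ) % M := by rw [hn, Int.add_mul_emod_self_right]
      rw [← hmodc, Int.emod_emod_of_dvd _ dvd_rfl] at h1
      have h2 : ((n % M : ℕ) : ℤ) = ((i % M : ℕ) : ℤ) := by
        rw [Int.natCast_mod, Int.natCast_mod]; exact h1
      exact_mod_cast h2
    rw [tsum_eq_single 0 (fun d _ => this d), this 0, mul_zero]

lemma sum_range_mul_eq (M N : ℕ) (f : ℕ → ℂ) :
    ∑ n ∈ Finset.range (M * N), f n = ∑ q ∈ Finset.range N, ∑ r ∈ Finset.range M, f (q * M + r) := by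
  induction N with
  | zero => simp
  | succ N ih =>
      rw [Nat.mul_succ, Finset.sum_range_add, ih, Finset.sum_range_succ]
      congr 1
      exact Finset.sum_congr rfl fun r _ => by rw [mul_comm M N]

lemma mulAdd_mod (M q r : ℕ) (hr : r < M) : (q * M + r) % M = r := by
  rw [add_comm, Nat.add_mul_mod_self_right, Nat.mod_eq_of_lt hr]

lemma mulAdd_div (M q r : ℕ) (hM : 0 < M) (hr : r < M) : (q * M + r) / M = q := by
  rw [add_comm, Nat.add_mul_div_right _ _ hM, Nat.div_eq_of_lt hr, zero_add]

lemma oddm_apply (M N : ℕ) (hM : 0 < M) (i q r : ℕ) (hr : r < M) :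
    oddmBasis M N i (q * M + r) =
      if r = i % M then (1 / Real.sqrt N) *
        Complex.exp (2 * Real.pi * Complex.I * ((i / M : ℕ) * (q : ℕ) : ℕ) / N) else 0 := by
  unfold oddmBasis
  rw [mulAdd_mod M q r hr, mulAdd_div M q r hM hr]

/-- (1) `i ↦ (i mod M, ⌊i/M⌋)` is a bijection from `{0,…,MN−1}` onto
`{0,…,M−1} × {0,…,N−1}`; (2) under this indexing the Zak-OTFS (pulsone) and
ODDM bases coincide pointwise; hence (3) the change-of-basis matrix between
the ODDM and Zak-OTFS bases is the identity (in particular, unitary and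
carrier-index-preserving). -/
theorem oddm_zak_identity (M N : ℕ) (hM : 0 < M) (hN : 0 < N) :
    Set.BijOn (fun i : ℕ => (i % M, i / M)) (Set.Iio (M * N))
      (Set.Iio M ×ˢ Set.Iio N) ∧
    (∀ i n, i < M * N → n < M * N → pulsone M N i n = oddmBasis M N i n) ∧
    (∀ i j, i < M * N → j < M * N →
      ∑ n ∈ Finset.range (M * N),
        oddmBasis M N i n * (starRingEnd ℂ) (pulsone M N j n)
      = if i = j then 1 else 0) := by
  refine ⟨⟨?_, ?_, ?_⟩, fun i n _ _ => pulsone_eq_oddm M N hM i n, ?_⟩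
  · intro i hi
    simp only [Set.mem_Iio, Set.mem_prod] at *
    exact ⟨Nat.mod_lt _ hM, (Nat.div_lt_iff_lt_mul hM).2 (by rwa [mul_comm N M])⟩
  · intro a _ b _ h
    simp only [Prod.mk.injEq] at h
    have hA := Nat.div_add_mod a M
    rw [h.1, h.2] at hA
    have hB := Nat.div_add_mod b M
    omega
  · rintro ⟨r, q⟩ ⟨hr, hq⟩
    simp only [Set.mem_Iio] at hr hq
    refine ⟨q * M + r, ?_, ?_⟩
    · simp only [Set.mem_Iio]
      calc q * M + r < q * M + M := by omega
        _ = (q + 1) * M := by ring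
        _ ≤ N * M := Nat.mul_le_mul_right M hq
        _ = M * N := mul_comm N M
    · simp only [Prod.mk.injEq]
      exact ⟨mulAdd_mod M q r hr, mulAdd_div M q r hM hr⟩
  · intro i j hi hj
    have hNC : (N : ℂ) ≠ 0 := Nat.cast_ne_zero.2 hN.ne'
    simp only [pulsone_eq_oddm M N hM]
    rw [sum_range_mul_eq]
    have haN : i / M < N := (Nat.div_lt_iff_lt_mul hM).2 (by rwa [mul_comm N M])
    have hbN : j / M < N := (Nat.div_lt_iff_lt_mul hM).2 (by rwa [mul_comm N M])
    by_cases hmod : i % M = j % M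
    · have hsqrt : ((Real.sqrt N : ℝ) : ℂ) * ((Real.sqrt N : ℝ) : ℂ) = (N : ℂ) := by
        rw [← Complex.ofReal_mul, Real.mul_self_sqrt (Nat.cast_nonneg N)]
        norm_cast
      set ζ : ℂ := Complex.exp (2 * Real.pi * Complex.I * (((i / M : ℕ) : ℂ) - ((j / M : ℕ) : ℂ)) / N) with hζ
      have hinner : ∀ q ∈ Finset.range N,
          (∑ r ∈ Finset.range M,
            oddmBasis M N i (q * M + r) * (starRingEnd ℂ) (oddmBasis M N j (q * M + r)))
          = (1 / (N : ℂ)) * ζ ^ q := by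
        intro q _
        rw [Finset.sum_congr rfl (fun r hr => by
          rw [oddm_apply M N hM i q r (Finset.mem_range.1 hr),
              oddm_apply M N hM j q r (Finset.mem_range.1 hr)])]
        rw [← hmod]
        simp only [apply_ite (starRingEnd ℂ), map_zero, ite_mul, mul_ite, mul_zero, zero_mul]
        rw [Finset.sum_ite_eq' (Finset.range M) (i % M)]
        rw [if_pos (Finset.mem_range.2 (Nat.mod_lt _ hM))]
        rw [map_mul, map_div₀, map_one, Complex.conj_ofReal, ← Complex.exp_conj]
        have hconj : (starRingEnd ℂ) (2 * Real.pi * Complex.I * ((j / M : ℕ) * (q : ℕ) : ℕ) / N)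
            = -(2 * Real.pi * Complex.I * ((j / M : ℕ) * (q : ℕ) : ℕ) / N) := by
          simp only [map_div₀, map_mul, Complex.conj_I, Complex.conj_ofReal, map_ofNat,
            Complex.conj_natCast]
          ring
        rw [hconj]
        rw [show (1 / ((Real.sqrt N : ℝ) : ℂ)) * Complex.exp (2 * Real.pi * Complex.I * ((i / M * q : ℕ) : ℂ) / N) *
            ((1 / ((Real.sqrt N : ℝ) : ℂ)) * Complex.exp (-(2 * Real.pi * Complex.I * ((j / M * q : ℕ) : ℂ) / N)))
            = (1 / (((Real.sqrt N : ℝ) : ℂ) * ((Real.sqrt N : ℝ) : ℂ))) *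
              (Complex.exp (2 * Real.pi * Complex.I * ((i / M * q : ℕ) : ℂ) / N) *
               Complex.exp (-(2 * Real.pi * Complex.I * ((j / M * q : ℕ) : ℂ) / N))) from by ring]
        rw [hsqrt, ← Complex.exp_add]
        congr 1
        rw [show (2 * Real.pi * Complex.I * ((i / M * q : ℕ) : ℂ) / N) +
            -(2 * Real.pi * Complex.I * ((j / M * q : ℕ) : ℂ) / N)
            = (q : ℂ) * (2 * Real.pi * Complex.I * (((i / M : ℕ) : ℂ) - ((j / M : ℕ) : ℂ)) / N) from by
              push_cast; ring]
        rw [Complex.exp_nat_mul, if_pos rfl]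
      rw [Finset.sum_congr rfl hinner, ← Finset.mul_sum]
      by_cases hab : i / M = j / M
      · have hij : i = j := by
          have hA := Nat.div_add_mod i M
          rw [hmod, hab] at hA
          have hB := Nat.div_add_mod j M
          omega
        rw [if_pos hij]
        have hζ1 : ζ = 1 := by rw [hζ, hab, sub_self, mul_zero, zero_div, Complex.exp_zero]
        rw [hζ1]
        simp [hNC]
      · have hij : i ≠ j := fun h => hab (by rw [h])
        rw [if_neg hij]
        have hζ1 : ζ ≠ 1 := by
          intro h1
          rw [hζ, Complex.exp_eq_one_iff] at h1
          obtain ⟨k, hk⟩ := h1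
          have h2π : (2 : ℂ) * Real.pi * Complex.I ≠ 0 := by
            simp [Real.pi_ne_zero, Complex.I_ne_zero]
          have hk2 : (((i / M : ℕ) : ℂ) - ((j / M : ℕ) : ℂ)) = k * N := by
            field_simp at hk
            have h3 : (2 : ℂ) * Real.pi * Complex.I * (((i / M : ℕ) : ℂ) - ((j / M : ℕ) : ℂ)) =
                (2 : ℂ) * Real.pi * Complex.I * (k * N) := by linear_combination (2 * Real.pi * Complex.I) * hk
            exact mul_left_cancel₀ h2π h3
          have hk3 : ((i / M : ℕ) : ℤ) - ((j / M : ℕ) : ℤ) = k * N := by exact_mod_cast hk2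
          have hdvd : (N : ℤ) ∣ (((i / M : ℕ) : ℤ) - ((j / M : ℕ) : ℤ)) :=
            ⟨k, by rw [hk3]; ring⟩
          have ha' : ((i / M : ℕ) : ℤ) < N := by exact_mod_cast haN
          have hb' : ((j / M : ℕ) : ℤ) < N := by exact_mod_cast hbN
          have ha0 : (0 : ℤ) ≤ ((i / M : ℕ) : ℤ) := Int.natCast_nonneg _
          have hb0 : (0 : ℤ) ≤ ((j / M : ℕ) : ℤ) := Int.natCast_nonneg _
          have habs : |((i / M : ℕ) : ℤ) - ((j / M : ℕ) : ℤ)| < N :=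
            abs_lt.2 ⟨by linarith, by linarith⟩
          have hz := Int.eq_zero_of_abs_lt_dvd hdvd habs
          omega
        rw [geom_sum_eq hζ1]
        have hζN : ζ ^ N = 1 := by
          rw [hζ, ← Complex.exp_nat_mul,
            show (N : ℂ) * (2 * Real.pi * Complex.I * (((i / M : ℕ) : ℂ) - ((j / M : ℕ) : ℂ)) / N)
            = ((((i / M : ℕ) : ℤ) - ((j / M : ℕ) : ℤ) : ℤ) : ℂ) * (2 * Real.pi * Complex.I) from by
              rw [Int.cast_sub, Int.cast_natCast, Int.cast_natCast]; field_simp]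
          exact Complex.exp_int_mul_two_pi_mul_I _
        rw [hζN, sub_self, zero_div, mul_zero]
    · have hij : i ≠ j := fun h => hmod (by rw [h])
      rw [if_neg hij]
      apply Finset.sum_eq_zero
      intro q _
      apply Finset.sum_eq_zero
      intro r hr
      rw [oddm_apply M N hM i q r (Finset.mem_range.1 hr),
          oddm_apply M N hM j q r (Finset.mem_range.1 hr)]
      by_cases h1 : r = i % M
      · rw [if_pos h1, if_neg (fun h2 => hmod (h1.symm.trans h2)), map_zero, mul_zero]
      · rw [if_neg h1, zero_mul]
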